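/- Let N ∈ ℕ, μ_i > 0 and ν_i > 0 for 0 ≤ i ≤ N. Set φ_n = ∑_{k=n}^N ν_k and δ = max_{0≤n≤N} (∑_{j=0}^n μ_j)·φ_n. Then for every n with 0 ≤ n ≤ N, ∑_{j=0}^n μ_j √(φ_j) ≤ 2δ/√(φ_n). -/

import Mathlib

private lemma sqrt_key {x y : ℝ} (hy : 0 < y) (hxy : y ≤ x) :
    (Real.sqrt x - Real.sqrt y) / x ≤ 1 / Real.sqrt y - 1 / Real.sqrt x := by
  have hx : 0 < x := lt_of_lt_of_le hy hxy
  have hsx : 0 < Real.sqrt x := Real.sqrt_pos.mpr hx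
  have hsy : 0 < Real.sqrt y := Real.sqrt_pos.mpr hy
  have hss : Real.sqrt y ≤ Real.sqrt x := Real.sqrt_le_sqrt hxy
  rw [div_sub_div _ _ (ne_of_gt hsy) (ne_of_gt hsx), one_mul, mul_one]
  have hden : Real.sqrt y * Real.sqrt x ≤ x := by
    calc Real.sqrt y * Real.sqrt x ≤ Real.sqrt x * Real.sqrt x :=
          mul_le_mul_of_nonneg_right hss hsx.le
      _ = x := Real.mul_self_sqrt hx.le
  have h1 : 0 ≤ Real.sqrt x - Real.sqrt y := by linarith
  exact div_le_div_of_nonneg_left h1 (by positivity) hden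

private lemma abel_aux (N : ℕ) (μ φ : ℕ → ℝ) (δ : ℝ)
    (hφpos : ∀ n ≤ N, 0 < φ n)
    (hφmono : ∀ n, n + 1 ≤ N → φ (n + 1) ≤ φ n)
    (hδ : ∀ n ≤ N, (∑ j ∈ Finset.range (n + 1), μ j) * φ n ≤ δ)
    (hμ : ∀ i ≤ N, 0 ≤ μ i) :
    ∀ n ≤ N, ∑ j ∈ Finset.range (n + 1), μ j * Real.sqrt (φ j)
      ≤ (∑ j ∈ Finset.range (n + 1), μ j) * Real.sqrt (φ n)
        + δ * (1 / Real.sqrt (φ n) - 1 / Real.sqrt (φ 0)) := by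
  intro n
  induction n with
  | zero => intro _; simp
  | succ n ih =>
    intro h
    have hn : n ≤ N := Nat.le_of_succ_le h
    have hx : 0 < φ n := hφpos n hn
    have hy : 0 < φ (n + 1) := hφpos (n + 1) h
    have hxy : φ (n + 1) ≤ φ n := hφmono n h
    have hMnonneg : 0 ≤ ∑ j ∈ Finset.range (n + 1), μ j :=
      Finset.sum_nonneg fun j hj => hμ j (le_trans (Nat.lt_succ_iff.mp (Finset.mem_range.mp hj)) hn)
    have hM : (∑ j ∈ Finset.range (n + 1), μ j) ≤ δ / φ n :=
      (le_div_iff₀ hx).mpr (hδ n hn)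
    have hδ0 : 0 ≤ δ := le_trans (mul_nonneg hMnonneg hx.le) (hδ n hn)
    have hkey : (∑ j ∈ Finset.range (n + 1), μ j) * (Real.sqrt (φ n) - Real.sqrt (φ (n + 1)))
        ≤ δ * (1 / Real.sqrt (φ (n + 1)) - 1 / Real.sqrt (φ n)) := by
      have h1 : 0 ≤ Real.sqrt (φ n) - Real.sqrt (φ (n + 1)) := by
        have := Real.sqrt_le_sqrt hxy; linarith
      calc (∑ j ∈ Finset.range (n + 1), μ j) * (Real.sqrt (φ n) - Real.sqrt (φ (n + 1)))
          ≤ (δ / φ n) * (Real.sqrt (φ n) - Real.sqrt (φ (n + 1))) :=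
            mul_le_mul_of_nonneg_right hM h1
        _ = δ * ((Real.sqrt (φ n) - Real.sqrt (φ (n + 1))) / φ n) := by ring
        _ ≤ δ * (1 / Real.sqrt (φ (n + 1)) - 1 / Real.sqrt (φ n)) :=
            mul_le_mul_of_nonneg_left (sqrt_key hy hxy) hδ0
    have ihn := ih hn
    rw [Finset.sum_range_succ, Finset.sum_range_succ (f := μ), add_mul]
    nlinarith [ihn, hkey]

/-- Key step for the lower basic estimate `λ₀ ≥ (4δ)⁻¹`: with
`φ n = ∑_{k=n}^N ν k` and `δ = max_n (∑_{j=0}^n μ j) * φ n`, one has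
`∑_{j=0}^n μ j * √(φ j) ≤ 2δ / √(φ n)` for every `n ≤ N`. -/
theorem stmt_1 (N : ℕ) (μ ν : ℕ → ℝ)
    (hμ : ∀ i ≤ N, 0 < μ i) (hν : ∀ i ≤ N, 0 < ν i) :
    ∀ n ≤ N,
      ∑ j ∈ Finset.range (n + 1), μ j * Real.sqrt (∑ k ∈ Finset.Icc j N, ν k) ≤
        2 * ((Finset.range (N + 1)).sup' ⟨0, Finset.mem_range.mpr (Nat.succ_pos N)⟩
            (fun m => (∑ j ∈ Finset.range (m + 1), μ j) * ∑ k ∈ Finset.Icc m N, ν k)) /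
          Real.sqrt (∑ k ∈ Finset.Icc n N, ν k) := by
  intro n hn
  set φ : ℕ → ℝ := fun m => ∑ k ∈ Finset.Icc m N, ν k with hφdef
  set δ : ℝ := (Finset.range (N + 1)).sup' ⟨0, Finset.mem_range.mpr (Nat.succ_pos N)⟩
      (fun m => (∑ j ∈ Finset.range (m + 1), μ j) * ∑ k ∈ Finset.Icc m N, ν k) with hδdef
  have hφpos : ∀ m ≤ N, 0 < φ m := by
    intro m hm
    apply Finset.sum_pos
    · intro k hk
      exact hν k (Finset.mem_Icc.mp hk).2
    · exact ⟨m, Finset.mem_Icc.mpr ⟨le_refl m, hm⟩⟩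
  have hφmono : ∀ m, m + 1 ≤ N → φ (m + 1) ≤ φ m := by
    intro m hm
    apply Finset.sum_le_sum_of_subset_of_nonneg
    · intro k hk
      rw [Finset.mem_Icc] at hk ⊢
      exact ⟨le_trans (Nat.le_succ m) hk.1, hk.2⟩
    · intro k hk _
      exact (hν k (Finset.mem_Icc.mp hk).2).le
  have hδle : ∀ m ≤ N, (∑ j ∈ Finset.range (m + 1), μ j) * φ m ≤ δ := by
    intro m hm
    exact Finset.le_sup' (fun m => (∑ j ∈ Finset.range (m + 1), μ j) * ∑ k ∈ Finset.Icc m N, ν k)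
      (Finset.mem_range.mpr (Nat.lt_succ_of_le hm))
  have hμ' : ∀ i ≤ N, 0 ≤ μ i := fun i hi => (hμ i hi).le
  have habel := abel_aux N μ φ δ hφpos hφmono hδle hμ' n hn
  have hx : 0 < φ n := hφpos n hn
  have hsx : 0 < Real.sqrt (φ n) := Real.sqrt_pos.mpr hx
  have hs0 : 0 < Real.sqrt (φ 0) := Real.sqrt_pos.mpr (hφpos 0 (Nat.zero_le N))
  have hMnonneg : 0 ≤ ∑ j ∈ Finset.range (n + 1), μ j :=
    Finset.sum_nonneg fun j hj => hμ' j (le_trans (Nat.lt_succ_iff.mp (Finset.mem_range.mp hj)) hn)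
  have hδ0 : 0 ≤ δ := le_trans (mul_nonneg hMnonneg hx.le) (hδle n hn)
  have hMbound : (∑ j ∈ Finset.range (n + 1), μ j) * Real.sqrt (φ n) ≤ δ / Real.sqrt (φ n) := by
    rw [le_div_iff₀ hsx, mul_assoc, Real.mul_self_sqrt hx.le]
    exact hδle n hn
  have htail : δ * (1 / Real.sqrt (φ n) - 1 / Real.sqrt (φ 0)) ≤ δ / Real.sqrt (φ n) := by
    have h1 : 0 ≤ δ * (1 / Real.sqrt (φ 0)) := by positivity
    have : δ * (1 / Real.sqrt (φ n)) = δ / Real.sqrt (φ n) := by ring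
    nlinarith [mul_sub δ (1 / Real.sqrt (φ n)) (1 / Real.sqrt (φ 0))]
  calc ∑ j ∈ Finset.range (n + 1), μ j * Real.sqrt (φ j)
      ≤ (∑ j ∈ Finset.range (n + 1), μ j) * Real.sqrt (φ n)
        + δ * (1 / Real.sqrt (φ n) - 1 / Real.sqrt (φ 0)) := habel
    _ ≤ δ / Real.sqrt (φ n) + δ / Real.sqrt (φ n) := add_le_add hMbound htail
    _ = 2 * δ / Real.sqrt (φ n) := by ring
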